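/- In the setting of the bridge-model construction (finite model class 𝓜 of MF-MDPs sharing reward r with global L_T/L_r Lipschitz conditions; ε₀ > 0 with |B^{ε₀}_π(M_Ctr^π;𝓜)| > |𝓜|/2 for every π; ε̄ > 0 with 2H(H+1)((1+L_T)^H − 1)·ε̄ ≤ ε₀ and 2H·ε̄ ≤ ε₀; Π_ε̄ a finite ε̄-cover of Π; bridge transitions P̈_{Br,h} and rewards r̈_{Br,h} defined as the w_π-weighted averages of the central models' frozen kernels and rewards with weights w_π(π̃) := max{2ε̄ − d_{∞,1}(π,π̃), 0}), define the bridge return J̈_Br(π̃;π) := Σ_{h=1}^H Σ_{s,a} ν_h(s)·π̃_h(a|s)·r̈_{Br,h}(s,a,π), where ν_1 := μ₁ and ν_{h+1}(s') := Σ_{s,a} ν_h(s)·π̃_h(a|s)·P̈_{Br,h}(s'|s,a,π). Suppose π* ∈ Π is a Nash equilibrium of the bridge model, i.e., J̈_Br(π̃;π*) ≤ J̈_Br(π*;π*) for all π̃ ∈ Π. Then, with M* := M_Ctr^{π*} the central model of π*, the Nash-equilibrium gap of π* in M* satisfies max_{π̃∈Π} [J_{M*}(π̃;π*) − J_{M*}(π*;π*)]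 ≤ 2·(1 + L_r·H)·(H+4)·ε₀. -/

import Mathlib

/-- ℓ1 distance between two functions on a finite type. -/
def l1 {X : Type*} [Fintype X] (p q : X → ℝ) : ℝ := ∑ x, |p x - q x|

/-- A (nonstationary Markov) policy: at each step `h` (0-indexed) and state `s`,
`π h s` is a probability distribution over actions. -/
def IsPolicy {S A : Type*} [Fintype A] (π : ℕ → S → A → ℝ) : Prop :=
  ∀ h s, (∀ a, 0 ≤ π h s a) ∧ ∑ a, π h s a = 1

/-- The transition kernels of a mean-field MDP with horizon `H`:
at each step `h < H`, `P h s a μ ∈ Δ(S)` whenever `μ ∈ Δ(S)`. -/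
def IsKernel {S A : Type*} [Fintype S] (H : ℕ) (P : ℕ → S → A → (S → ℝ) → S → ℝ) : Prop :=
  ∀ h, h < H → ∀ s a (μ : S → ℝ), μ ∈ stdSimplex ℝ S → P h s a μ ∈ stdSimplex ℝ S

/-- Induced state densities: `dens P μ₁ π h = μ^π_{M,h+1}` (1-indexed step `h+1`). -/
def dens {S A : Type*} [Fintype S] [Fintype A] (P : ℕ → S → A → (S → ℝ) → S → ℝ)
    (μ₁ : S → ℝ) (π : ℕ → S → A → ℝ) : ℕ → S → ℝ
  | 0 => μ₁
  | h + 1 => fun s' => ∑ s, ∑ a, dens P μ₁ π h s * π h s a * P h s a (dens P μ₁ π h) s'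

/-- The state law of executing `π̃` while the kernels are frozen at the densities induced
by the reference policy `π` in model `M = (P, μ₁)`. -/
def densF {S A : Type*} [Fintype S] [Fintype A] (P : ℕ → S → A → (S → ℝ) → S → ℝ)
    (μ₁ : S → ℝ) (π πt : ℕ → S → A → ℝ) : ℕ → S → ℝ
  | 0 => μ₁
  | h + 1 => fun s' => ∑ s, ∑ a, densF P μ₁ π πt h s * πt h s a * P h s a (dens P μ₁ π h) s'

/-- `E_{π̃,M(π)}[Σ_{h=1}^H f_h(s_h,a_h)]`. -/
def expF {S A : Type*} [Fintype S] [Fintype A] (H : ℕ) (P : ℕ → S → A → (S → ℝ) → S → ℝ)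
    (μ₁ : S → ℝ) (π πt : ℕ → S → A → ℝ) (f : ℕ → S → A → ℝ) : ℝ :=
  ∑ h ∈ Finset.range H, ∑ s, ∑ a, densF P μ₁ π πt h s * πt h s a * f h s a

/-- The return `J_M(π̃;π)` of executing `π̃` with transitions and rewards frozen by `π`. -/
def Jret {S A : Type*} [Fintype S] [Fintype A] (H : ℕ) (P : ℕ → S → A → (S → ℝ) → S → ℝ)
    (r : ℕ → S → A → (S → ℝ) → ℝ) (μ₁ : S → ℝ) (πt π : ℕ → S → A → ℝ) : ℝ :=
  expF H P μ₁ π πt fun h s a => r h s a (dens P μ₁ π h)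

/-- One-sided conditional model distance `d^{π̃}(M,M'|π)`. -/
def dCond {S A : Type*} [Fintype S] [Fintype A] (H : ℕ)
    (P P' : ℕ → S → A → (S → ℝ) → S → ℝ) (μ₁ : S → ℝ) (π πt : ℕ → S → A → ℝ) : ℝ :=
  expF H P μ₁ π πt fun h s a => l1 (P h s a (dens P μ₁ π h)) (P' h s a (dens P' μ₁ π h))

/-- The distance `d_{∞,1}(π,π') = max_{h<H, s} ‖π_h(·|s) − π'_h(·|s)‖₁` on policies. -/
noncomputable def dInf {S A : Type*} [Fintype A] (H : ℕ) (π π' : ℕ → S → A → ℝ) : ℝ :=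
  sSup {x : ℝ | ∃ h < H, ∃ s : S, x = l1 (π h s) (π' h s)}

/-- The `ε₀`-neighborhood `B^{ε₀}_π(m;𝓜)` of the model `m` in the model class indexed by
`ι`, conditioned on the reference policy `π`. -/
def nbhd {S A ι : Type*} [Fintype S] [Fintype A] (H : ℕ)
    (P : ι → ℕ → S → A → (S → ℝ) → S → ℝ) (μ₁ : S → ℝ) (ε₀ : ℝ)
    (π : ℕ → S → A → ℝ) (m : ι) : Set ι :=
  {m' | ∀ πt, IsPolicy πt →
    dCond H (P m) (P m') μ₁ π πt ≤ ε₀ ∧ dCond H (P m') (P m) μ₁ π πt ≤ ε₀}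

/-- State law of executing `π̃` in a policy-aware model whose kernels are frozen by the
reference policy `π`. -/
def densPam {S A : Type*} [Fintype S] [Fintype A]
    (Pd : ℕ → S → A → (ℕ → S → A → ℝ) → S → ℝ)
    (μ₁ : S → ℝ) (π πt : ℕ → S → A → ℝ) : ℕ → S → ℝ
  | 0 => μ₁
  | h + 1 => fun s' => ∑ s, ∑ a, densPam Pd μ₁ π πt h s * πt h s a * Pd h s a π s'

/-- The return `J̈(π̃;π)` of executing `π̃` in a policy-aware model with transitions and
rewards frozen by the reference policy `π`. -/
def Jpam {S A : Type*} [Fintype S] [Fintype A] (H : ℕ)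
    (Pd : ℕ → S → A → (ℕ → S → A → ℝ) → S → ℝ)
    (rd : ℕ → S → A → (ℕ → S → A → ℝ) → ℝ)
    (μ₁ : S → ℝ) (πt π : ℕ → S → A → ℝ) : ℝ :=
  ∑ h ∈ Finset.range H, ∑ s, ∑ a, densPam Pd μ₁ π πt h s * πt h s a * rd h s a π
section BridgeAux



variable {S A : Type*} [Fintype S] [Fintype A]

lemma l1_nonneg {X : Type*} [Fintype X] (p q : X → ℝ) : 0 ≤ l1 p q :=
  Finset.sum_nonneg fun _ _ => abs_nonneg _

lemma l1_symm {X : Type*} [Fintype X] (p q : X → ℝ) : l1 p q = l1 q p := by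
  unfold l1; simp [abs_sub_comm]

lemma l1_triangle {X : Type*} [Fintype X] (p q r : X → ℝ) : l1 p r ≤ l1 p q + l1 q r := by
  unfold l1
  rw [← Finset.sum_add_distrib]
  exact Finset.sum_le_sum fun x _ => abs_sub_le _ _ _

lemma l1_le_two {X : Type*} [Fintype X] {p q : X → ℝ} (hp : p ∈ stdSimplex ℝ X)
    (hq : q ∈ stdSimplex ℝ X) : l1 p q ≤ 2 := by
  unfold l1
  have : ∀ x ∈ Finset.univ, |p x - q x| ≤ p x + q x := by
    intro x _
    have := abs_sub (p x) (q x)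
    rw [abs_of_nonneg (hp.1 x), abs_of_nonneg (hq.1 x)] at this
    exact this
  calc ∑ x, |p x - q x| ≤ ∑ x, (p x + q x) := Finset.sum_le_sum this
    _ = 2 := by rw [Finset.sum_add_distrib, hp.2, hq.2]; norm_num

/-- generic frozen-kernel chain -/
def chn (K : ℕ → S → A → S → ℝ) (μ₁ : S → ℝ) (σ : ℕ → S → A → ℝ) : ℕ → S → ℝ
  | 0 => μ₁
  | h + 1 => fun s' => ∑ s, ∑ a, chn K μ₁ σ h s * σ h s a * K h s a s'

lemma densF_eq_chn (P : ℕ → S → A → (S → ℝ) → S → ℝ) (μ₁ : S → ℝ) (π σ : ℕ → S → A → ℝ) :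
    ∀ h, densF P μ₁ π σ h = chn (fun g s a => P g s a (dens P μ₁ π g)) μ₁ σ h := by
  intro h
  induction h with
  | zero => rfl
  | succ h ih => funext s'; simp only [densF, chn, ih]

lemma dens_eq_densF (P : ℕ → S → A → (S → ℝ) → S → ℝ) (μ₁ : S → ℝ) (π : ℕ → S → A → ℝ) :
    ∀ h, dens P μ₁ π h = densF P μ₁ π π h := by
  intro h
  induction h with
  | zero => rfl
  | succ h ih => funext s'; simp only [dens, densF, ih]

lemma densPam_eq_chn (Pd : ℕ → S → A → (ℕ → S → A → ℝ) → S → ℝ) (μ₁ : S → ℝ)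
    (π σ : ℕ → S → A → ℝ) :
    ∀ h, densPam Pd μ₁ π σ h = chn (fun g s a => Pd g s a π) μ₁ σ h := by
  intro h
  induction h with
  | zero => rfl
  | succ h ih => funext s'; simp only [densPam, chn, ih]

lemma chn_mem {K : ℕ → S → A → S → ℝ} {μ₁ : S → ℝ} {σ : ℕ → S → A → ℝ} (n : ℕ)
    (hμ : μ₁ ∈ stdSimplex ℝ S) (hσ : IsPolicy σ)
    (hK : ∀ g, g < n → ∀ s a, K g s a ∈ stdSimplex ℝ S) :
    ∀ h, h ≤ n → chn K μ₁ σ h ∈ stdSimplex ℝ S := by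
  intro h
  induction h with
  | zero => exact fun _ => hμ
  | succ h ih =>
      intro hh
      have hg : h < n := lt_of_lt_of_le (Nat.lt_succ_self h) hh
      have ihm := ih (le_of_lt hg)
      constructor
      · intro s'
        refine Finset.sum_nonneg fun s _ => Finset.sum_nonneg fun a _ => ?_
        exact mul_nonneg (mul_nonneg (ihm.1 s) ((hσ h s).1 a)) ((hK h hg s a).1 s')
      · show ∑ s', ∑ s, ∑ a, chn K μ₁ σ h s * σ h s a * K h s a s' = 1
        rw [Finset.sum_comm]
        have : ∀ s, ∑ s', ∑ a, chn K μ₁ σ h s * σ h s a * K h s a s'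
            = chn K μ₁ σ h s := by
          intro s
          rw [Finset.sum_comm]
          have : ∀ a, ∑ s', chn K μ₁ σ h s * σ h s a * K h s a s'
              = chn K μ₁ σ h s * σ h s a := by
            intro a
            rw [← Finset.mul_sum, (hK h hg s a).2, mul_one]
          rw [Finset.sum_congr rfl fun a _ => this a, ← Finset.mul_sum, (hσ h s).2, mul_one]
        rw [Finset.sum_congr rfl fun s _ => this s, ihm.2]

end BridgeAux
section BridgeAux2

variable {S A : Type*} [Fintype S] [Fintype A]

lemma l1_mix_le (x y : S → A → ℝ) (p q : S → A → S → ℝ)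
    (hx : ∀ s a, 0 ≤ x s a) (hq1 : ∀ s a, ∑ s', |q s a s'| ≤ 1) :
    l1 (fun s' => ∑ s, ∑ a, x s a * p s a s') (fun s' => ∑ s, ∑ a, y s a * q s a s') ≤
      (∑ s, ∑ a, x s a * l1 (p s a) (q s a)) + ∑ s, ∑ a, |x s a - y s a| := by
  have key : ∀ s', |(∑ s, ∑ a, x s a * p s a s') - ∑ s, ∑ a, y s a * q s a s'| ≤
      (∑ s, ∑ a, x s a * |p s a s' - q s a s'|) +
      ∑ s, ∑ a, |x s a - y s a| * |q s a s'| := by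
    intro s'
    have hsplit : (∑ s, ∑ a, x s a * p s a s') - ∑ s, ∑ a, y s a * q s a s'
        = ∑ s, ∑ a, (x s a * (p s a s' - q s a s') + (x s a - y s a) * q s a s') := by
      rw [← Finset.sum_sub_distrib]
      refine Finset.sum_congr rfl fun s _ => ?_
      rw [← Finset.sum_sub_distrib]
      exact Finset.sum_congr rfl fun a _ => by ring
    rw [hsplit]
    calc |∑ s, ∑ a, (x s a * (p s a s' - q s a s') + (x s a - y s a) * q s a s')|
        ≤ ∑ s, |∑ a, (x s a * (p s a s' - q s a s') + (x s a - y s a) * q s a s')| :=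
          Finset.abs_sum_le_sum_abs _ _
      _ ≤ ∑ s, ∑ a, |x s a * (p s a s' - q s a s') + (x s a - y s a) * q s a s'| :=
          Finset.sum_le_sum fun s _ => Finset.abs_sum_le_sum_abs _ _
      _ ≤ ∑ s, ∑ a, (x s a * |p s a s' - q s a s'| + |x s a - y s a| * |q s a s'|) := by
          refine Finset.sum_le_sum fun s _ => Finset.sum_le_sum fun a _ => ?_
          calc |x s a * (p s a s' - q s a s') + (x s a - y s a) * q s a s'|
              ≤ |x s a * (p s a s' - q s a s')| + |(x s a - y s a) * q s a s'| :=
                abs_add_le _ _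
            _ = x s a * |p s a s' - q s a s'| + |x s a - y s a| * |q s a s'| := by
                rw [abs_mul, abs_mul, abs_of_nonneg (hx s a)]
      _ = (∑ s, ∑ a, x s a * |p s a s' - q s a s'|) +
            ∑ s, ∑ a, |x s a - y s a| * |q s a s'| := by
          rw [← Finset.sum_add_distrib]
          exact Finset.sum_congr rfl fun s _ => (Finset.sum_add_distrib)
  calc l1 (fun s' => ∑ s, ∑ a, x s a * p s a s') (fun s' => ∑ s, ∑ a, y s a * q s a s')
      ≤ ∑ s', ((∑ s, ∑ a, x s a * |p s a s' - q s a s'|) +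
          ∑ s, ∑ a, |x s a - y s a| * |q s a s'|) := Finset.sum_le_sum fun s' _ => key s'
    _ = (∑ s', ∑ s, ∑ a, x s a * |p s a s' - q s a s'|) +
          ∑ s', ∑ s, ∑ a, |x s a - y s a| * |q s a s'| := Finset.sum_add_distrib
    _ ≤ (∑ s, ∑ a, x s a * l1 (p s a) (q s a)) + ∑ s, ∑ a, |x s a - y s a| := by
        gcongr ?_ + ?_
        · rw [Finset.sum_comm]
          refine le_of_eq (Finset.sum_congr rfl fun s _ => ?_)
          rw [Finset.sum_comm]
          refine Finset.sum_congr rfl fun a _ => ?_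
          rw [← Finset.mul_sum]
          rfl
        · rw [Finset.sum_comm]
          refine Finset.sum_le_sum fun s _ => ?_
          rw [Finset.sum_comm]
          refine Finset.sum_le_sum fun a _ => ?_
          rw [← Finset.mul_sum]
          calc |x s a - y s a| * ∑ s', |q s a s'| ≤ |x s a - y s a| * 1 := by
                exact mul_le_mul_of_nonneg_left (hq1 s a) (abs_nonneg _)
            _ = |x s a - y s a| := mul_one _

lemma chn_l1_le {K K' : ℕ → S → A → S → ℝ} {μ₁ : S → ℝ} {σ : ℕ → S → A → ℝ} (n : ℕ)
    (hμ : μ₁ ∈ stdSimplex ℝ S) (hσ : IsPolicy σ)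
    (hK : ∀ g, g < n → ∀ s a, K g s a ∈ stdSimplex ℝ S)
    (hK' : ∀ g, g < n → ∀ s a, K' g s a ∈ stdSimplex ℝ S) :
    ∀ h, h ≤ n → l1 (chn K μ₁ σ h) (chn K' μ₁ σ h) ≤
      ∑ g ∈ Finset.range h, ∑ s, ∑ a, chn K μ₁ σ g s * σ g s a * l1 (K g s a) (K' g s a) := by
  intro h
  induction h with
  | zero =>
      intro _
      show l1 μ₁ μ₁ ≤ _
      simp [l1]
  | succ h ih =>
      intro hh
      have hg : h < n := lt_of_lt_of_le (Nat.lt_succ_self h) hh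
      have hmem := chn_mem (K := K) n hμ hσ hK h (le_of_lt hg)
      have step : l1 (chn K μ₁ σ (h+1)) (chn K' μ₁ σ (h+1)) ≤
          (∑ s, ∑ a, (chn K μ₁ σ h s * σ h s a) * l1 (K h s a) (K' h s a)) +
          ∑ s, ∑ a, |chn K μ₁ σ h s * σ h s a - chn K' μ₁ σ h s * σ h s a| := by
        have := l1_mix_le (fun s a => chn K μ₁ σ h s * σ h s a)
          (fun s a => chn K' μ₁ σ h s * σ h s a) (fun s a => K h s a) (fun s a => K' h s a)
          (fun s a => mul_nonneg (hmem.1 s) ((hσ h s).1 a))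
          (fun s a => by
            have hm := hK' h hg s a
            refine le_of_eq ?_
            rw [Finset.sum_congr rfl fun s' _ => abs_of_nonneg (hm.1 s')]
            exact hm.2)
        exact this
      have habs : ∑ s, ∑ a, |chn K μ₁ σ h s * σ h s a - chn K' μ₁ σ h s * σ h s a|
          = l1 (chn K μ₁ σ h) (chn K' μ₁ σ h) := by
        unfold l1
        refine Finset.sum_congr rfl fun s _ => ?_
        have : ∀ a, |chn K μ₁ σ h s * σ h s a - chn K' μ₁ σ h s * σ h s a|
            = |chn K μ₁ σ h s - chn K' μ₁ σ h s| * σ h s a := by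
          intro a
          rw [← sub_mul, abs_mul, abs_of_nonneg ((hσ h s).1 a)]
        rw [Finset.sum_congr rfl fun a _ => this a, ← Finset.mul_sum, (hσ h s).2, mul_one]
      rw [Finset.sum_range_succ]
      calc l1 (chn K μ₁ σ (h+1)) (chn K' μ₁ σ (h+1))
          ≤ (∑ s, ∑ a, (chn K μ₁ σ h s * σ h s a) * l1 (K h s a) (K' h s a)) +
            l1 (chn K μ₁ σ h) (chn K' μ₁ σ h) := by rw [← habs]; exact step
        _ ≤ (∑ s, ∑ a, chn K μ₁ σ h s * σ h s a * l1 (K h s a) (K' h s a)) +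
            ∑ g ∈ Finset.range h, ∑ s, ∑ a,
              chn K μ₁ σ g s * σ g s a * l1 (K g s a) (K' g s a) := by
            gcongr
            exact ih (le_of_lt hg)
        _ = _ := by ring

lemma exp_le_of_le {ν : S → ℝ} {σA : S → A → ℝ} {f : S → A → ℝ} {C : ℝ}
    (hν0 : ∀ s, 0 ≤ ν s) (hν1 : ∑ s, ν s = 1)
    (hσ : ∀ s, (∀ a, 0 ≤ σA s a) ∧ ∑ a, σA s a = 1)
    (hf : ∀ s a, f s a ≤ C) :
    ∑ s, ∑ a, ν s * σA s a * f s a ≤ C := by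
  calc ∑ s, ∑ a, ν s * σA s a * f s a ≤ ∑ s, ∑ a, ν s * σA s a * C := by
        refine Finset.sum_le_sum fun s _ => Finset.sum_le_sum fun a _ => ?_
        exact mul_le_mul_of_nonneg_left (hf s a) (mul_nonneg (hν0 s) ((hσ s).1 a))
    _ = C := by
        have : ∀ s, ∑ a, ν s * σA s a * C = ν s * C := by
          intro s
          have : ∀ a, ν s * σA s a * C = ν s * C * σA s a := fun a => by ring
          rw [Finset.sum_congr rfl fun a _ => this a, ← Finset.mul_sum, (hσ s).2, mul_one]
        rw [Finset.sum_congr rfl fun s _ => this s, ← Finset.sum_mul, hν1, one_mul]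

lemma exp_shift {ν ν' : S → ℝ} {σA : S → A → ℝ} {g : S → A → ℝ}
    (hν1 : ∑ s, ν s = 1) (hν'1 : ∑ s, ν' s = 1)
    (hσ : ∀ s, (∀ a, 0 ≤ σA s a) ∧ ∑ a, σA s a = 1)
    (hg0 : ∀ s a, 0 ≤ g s a) (hg2 : ∀ s a, g s a ≤ 2) :
    ∑ s, ∑ a, ν s * σA s a * g s a ≤ (∑ s, ∑ a, ν' s * σA s a * g s a) + l1 ν ν' := by
  set G : S → ℝ := fun s => ∑ a, σA s a * g s a with hG
  have hrw : ∀ (ρ : S → ℝ), ∑ s, ∑ a, ρ s * σA s a * g s a = ∑ s, ρ s * G s := by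
    intro ρ
    refine Finset.sum_congr rfl fun s _ => ?_
    rw [hG, Finset.mul_sum]
    exact Finset.sum_congr rfl fun a _ => by ring
  rw [hrw ν, hrw ν']
  have hGb : ∀ s, |G s - 1| ≤ 1 := by
    intro s
    have h0 : 0 ≤ G s := Finset.sum_nonneg fun a _ => mul_nonneg ((hσ s).1 a) (hg0 s a)
    have h2 : G s ≤ 2 := by
      calc G s ≤ ∑ a, σA s a * 2 :=
            Finset.sum_le_sum fun a _ => mul_le_mul_of_nonneg_left (hg2 s a) ((hσ s).1 a)
        _ = 2 := by rw [← Finset.sum_mul, (hσ s).2, one_mul]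
    rw [abs_le]; constructor <;> linarith
  have key : ∑ s, ν s * G s - ∑ s, ν' s * G s ≤ l1 ν ν' := by
    have h1 : ∑ s, (ν s - ν' s) * (G s - 1) = ∑ s, ν s * G s - ∑ s, ν' s * G s := by
      have e : ∀ s, (ν s - ν' s) * (G s - 1) = (ν s * G s - ν' s * G s) - (ν s - ν' s) :=
        fun s => by ring
      rw [Finset.sum_congr rfl fun s _ => e s, Finset.sum_sub_distrib,
        Finset.sum_sub_distrib, Finset.sum_sub_distrib, hν1, hν'1]
      ring
    rw [← h1]
    calc ∑ s, (ν s - ν' s) * (G s - 1) ≤ ∑ s, |(ν s - ν' s) * (G s - 1)| :=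
          Finset.sum_le_sum fun s _ => le_abs_self _
      _ ≤ ∑ s, |ν s - ν' s| := by
          refine Finset.sum_le_sum fun s _ => ?_
          rw [abs_mul]
          calc |ν s - ν' s| * |G s - 1| ≤ |ν s - ν' s| * 1 :=
                mul_le_mul_of_nonneg_left (hGb s) (abs_nonneg _)
            _ = |ν s - ν' s| := mul_one _
      _ = l1 ν ν' := rfl
  linarith

end BridgeAux2
section BridgeAux3

variable {S A : Type*} [Fintype S] [Fintype A]

lemma dens_eq_chn (P : ℕ → S → A → (S → ℝ) → S → ℝ) (μ₁ : S → ℝ) (π : ℕ → S → A → ℝ) (h : ℕ) :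
    dens P μ₁ π h = chn (fun g s a => P g s a (dens P μ₁ π g)) μ₁ π h := by
  rw [dens_eq_densF, densF_eq_chn]

lemma dens_mem {P : ℕ → S → A → (S → ℝ) → S → ℝ} {μ₁ : S → ℝ} {π : ℕ → S → A → ℝ} (H : ℕ)
    (hker : IsKernel H P) (hμ : μ₁ ∈ stdSimplex ℝ S) (hπ : IsPolicy π) :
    ∀ h, h ≤ H → dens P μ₁ π h ∈ stdSimplex ℝ S := by
  have main : ∀ h, h ≤ H → ∀ g, g ≤ h → dens P μ₁ π g ∈ stdSimplex ℝ S := by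
    intro h
    induction h with
    | zero =>
        intro _ g hg
        interval_cases g
        exact hμ
    | succ h ih =>
        intro hh g hg
        have hhH : h ≤ H := le_trans (Nat.le_succ h) hh
        rcases Nat.lt_or_ge g (h+1) with hlt | hge
        · exact ih hhH g (Nat.lt_succ_iff.mp hlt)
        · have heq : g = h + 1 := le_antisymm hg hge
          subst heq
          rw [dens_eq_chn]
          refine chn_mem (h+1) hμ hπ ?_ (h+1) le_rfl
          intro g' hg' s a
          exact hker g' (lt_of_lt_of_le hg' hh) s a _
            (ih hhH g' (Nat.lt_succ_iff.mp hg'))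
  exact fun h hh => main h hh h le_rfl

end BridgeAux3
section BridgeAux4

variable {S A : Type*} [Fintype S] [Fintype A]

lemma dens_pert (H : ℕ) {P : ℕ → S → A → (S → ℝ) → S → ℝ} (hker : IsKernel H P)
    {L_T : ℝ} (hL : 0 ≤ L_T)
    (hPlip : ∀ h, h < H → ∀ s a, ∀ μ ∈ stdSimplex ℝ S, ∀ μ' ∈ stdSimplex ℝ S,
      l1 (P h s a μ) (P h s a μ') ≤ L_T * l1 μ μ')
    {μ₁ : S → ℝ} (hμ : μ₁ ∈ stdSimplex ℝ S) {π π' : ℕ → S → A → ℝ}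
    (hπ : IsPolicy π) (hπ' : IsPolicy π')
    {δ : ℝ} (hδ0 : 0 ≤ δ) (hδ : ∀ h, h < H → ∀ s, l1 (π h s) (π' h s) ≤ δ) :
    ∀ h, h ≤ H →
      l1 (dens P μ₁ π h) (dens P μ₁ π' h) ≤ δ * ∑ j ∈ Finset.range h, (1 + L_T) ^ j := by
  intro h
  induction h with
  | zero =>
      intro _
      simp [l1, dens]
  | succ h ih =>
      intro hh
      have hhH : h < H := hh
      have ihb := ih (le_of_lt hhH)
      set μ := dens P μ₁ π h with hμdef
      set μ' := dens P μ₁ π' h with hμ'def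
      have hμm : μ ∈ stdSimplex ℝ S := dens_mem H hker hμ hπ h (le_of_lt hhH)
      have hμ'm : μ' ∈ stdSimplex ℝ S := dens_mem H hker hμ hπ' h (le_of_lt hhH)
      have step : l1 (dens P μ₁ π (h+1)) (dens P μ₁ π' (h+1)) ≤
          (∑ s, ∑ a, μ s * π h s a * l1 (P h s a μ) (P h s a μ')) +
          ∑ s, ∑ a, |μ s * π h s a - μ' s * π' h s a| := by
        have := l1_mix_le (fun s a => μ s * π h s a) (fun s a => μ' s * π' h s a)
          (fun s a => P h s a μ) (fun s a => P h s a μ')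
          (fun s a => mul_nonneg (hμm.1 s) ((hπ h s).1 a))
          (fun s a => by
            have hm := hker h hhH s a μ' hμ'm
            refine le_of_eq ?_
            rw [Finset.sum_congr rfl fun s' _ => abs_of_nonneg (hm.1 s')]
            exact hm.2)
        exact this
      have t1 : ∑ s, ∑ a, μ s * π h s a * l1 (P h s a μ) (P h s a μ') ≤ L_T * l1 μ μ' :=
        exp_le_of_le hμm.1 hμm.2 (hπ h) (fun s a => hPlip h hhH s a μ hμm μ' hμ'm)
      have t2 : ∑ s, ∑ a, |μ s * π h s a - μ' s * π' h s a| ≤ l1 μ μ' + δ := by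
        have hbd : ∀ s a, |μ s * π h s a - μ' s * π' h s a| ≤
            |μ s - μ' s| * π h s a + μ' s * |π h s a - π' h s a| := by
          intro s a
          calc |μ s * π h s a - μ' s * π' h s a|
              = |(μ s - μ' s) * π h s a + μ' s * (π h s a - π' h s a)| := by ring_nf
            _ ≤ |(μ s - μ' s) * π h s a| + |μ' s * (π h s a - π' h s a)| := abs_add_le _ _
            _ = |μ s - μ' s| * π h s a + μ' s * |π h s a - π' h s a| := by
                rw [abs_mul, abs_mul, abs_of_nonneg ((hπ h s).1 a), abs_of_nonneg (hμ'm.1 s)]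
        calc ∑ s, ∑ a, |μ s * π h s a - μ' s * π' h s a|
            ≤ ∑ s, ∑ a, (|μ s - μ' s| * π h s a + μ' s * |π h s a - π' h s a|) :=
              Finset.sum_le_sum fun s _ => Finset.sum_le_sum fun a _ => hbd s a
          _ = (∑ s, ∑ a, |μ s - μ' s| * π h s a) + ∑ s, ∑ a, μ' s * |π h s a - π' h s a| := by
              rw [← Finset.sum_add_distrib]
              exact Finset.sum_congr rfl fun s _ => Finset.sum_add_distrib
          _ ≤ l1 μ μ' + δ := by
              gcongr ?_ + ?_
              · refine le_of_eq ?_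
                unfold l1
                refine Finset.sum_congr rfl fun s _ => ?_
                rw [← Finset.mul_sum, (hπ h s).2, mul_one]
              · calc ∑ s, ∑ a, μ' s * |π h s a - π' h s a|
                    = ∑ s, μ' s * l1 (π h s) (π' h s) := by
                      exact Finset.sum_congr rfl fun s _ => by rw [← Finset.mul_sum]; rfl
                  _ ≤ ∑ s, μ' s * δ := Finset.sum_le_sum fun s _ =>
                      mul_le_mul_of_nonneg_left (hδ h hhH s) (hμ'm.1 s)
                  _ = δ := by rw [← Finset.sum_mul, hμ'm.2, one_mul]
      have hgeom : δ * ∑ j ∈ Finset.range (h+1), (1 + L_T) ^ j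
          = (1 + L_T) * (δ * ∑ j ∈ Finset.range h, (1 + L_T) ^ j) + δ := by
        rw [geom_sum_succ]
        ring
      calc l1 (dens P μ₁ π (h+1)) (dens P μ₁ π' (h+1))
          ≤ L_T * l1 μ μ' + (l1 μ μ' + δ) := by
            refine le_trans step ?_
            gcongr
          _ = (1 + L_T) * l1 μ μ' + δ := by ring
          _ ≤ (1 + L_T) * (δ * ∑ j ∈ Finset.range h, (1 + L_T) ^ j) + δ := by
            gcongr
          _ = δ * ∑ j ∈ Finset.range (h+1), (1 + L_T) ^ j := hgeom.symm

lemma geom_mul_eq (H : ℕ) (L_T : ℝ) :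
    L_T * ∑ j ∈ Finset.range H, (1 + L_T) ^ j = (1 + L_T) ^ H - 1 := by
  have := geom_sum_mul (1 + L_T) H
  simp only [add_sub_cancel_left] at this
  rw [mul_comm]
  exact this

lemma geom_sum_le (H h : ℕ) (hh : h ≤ H) {L_T : ℝ} (hL : 0 ≤ L_T) :
    ∑ j ∈ Finset.range h, (1 + L_T) ^ j ≤ (h : ℝ) * (1 + L_T) ^ H := by
  calc ∑ j ∈ Finset.range h, (1 + L_T) ^ j ≤ ∑ j ∈ Finset.range h, (1 + L_T) ^ H := by
        refine Finset.sum_le_sum fun j hj => ?_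
        exact pow_le_pow_right₀ (by linarith) (le_trans (le_of_lt (Finset.mem_range.mp hj)) hh)
    _ = (h : ℝ) * (1 + L_T) ^ H := by
        rw [Finset.sum_const, Finset.card_range, nsmul_eq_mul]

lemma geom_sum_le' (H h : ℕ) (hh : h ≤ H) {L_T : ℝ} (hL : 0 ≤ L_T) :
    ∑ j ∈ Finset.range h, (1 + L_T) ^ j ≤ ∑ j ∈ Finset.range H, (1 + L_T) ^ j := by
  refine Finset.sum_le_sum_of_subset_of_nonneg (Finset.range_subset_range.mpr hh) ?_
  intro j _ _
  positivity

lemma dCond_eq_chn (H : ℕ) (P P' : ℕ → S → A → (S → ℝ) → S → ℝ) (μ₁ : S → ℝ)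
    (π pit : ℕ → S → A → ℝ) :
    dCond H P P' μ₁ π pit = ∑ h ∈ Finset.range H, ∑ s, ∑ a,
      chn (fun g s a => P g s a (dens P μ₁ π g)) μ₁ pit h s * pit h s a *
        l1 (P h s a (dens P μ₁ π h)) (P' h s a (dens P' μ₁ π h)) := by
  unfold dCond expF
  refine Finset.sum_congr rfl fun h _ => ?_
  rw [densF_eq_chn]

end BridgeAux4
section BridgeAux5

variable {S A ι : Type*} [Fintype S] [Fintype A]

lemma exp_mono {ν : S → ℝ} {σA f g : S → A → ℝ}
    (hν0 : ∀ s, 0 ≤ ν s) (hσ0 : ∀ s a, 0 ≤ σA s a) (hfg : ∀ s a, f s a ≤ g s a) :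
    ∑ s, ∑ a, ν s * σA s a * f s a ≤ ∑ s, ∑ a, ν s * σA s a * g s a :=
  Finset.sum_le_sum fun s _ => Finset.sum_le_sum fun a _ =>
    mul_le_mul_of_nonneg_left (hfg s a) (mul_nonneg (hν0 s) (hσ0 s a))

lemma chn_l1_le_dCond {P P' : ℕ → S → A → (S → ℝ) → S → ℝ} {μ₁ : S → ℝ}
    {π exec : ℕ → S → A → ℝ} (H : ℕ)
    (hker : IsKernel H P) (hker' : IsKernel H P')
    (hμ : μ₁ ∈ stdSimplex ℝ S) (hπ : IsPolicy π) (hπ' : IsPolicy π) (hexec : IsPolicy exec)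
    (hπ'' : IsPolicy π) :
    ∀ h, h ≤ H →
      l1 (chn (fun g s a => P g s a (dens P μ₁ π g)) μ₁ exec h)
         (chn (fun g s a => P' g s a (dens P' μ₁ π g)) μ₁ exec h) ≤
      dCond H P P' μ₁ π exec := by
  intro h hh
  have hK : ∀ g, g < H → ∀ s a,
      (fun g s a => P g s a (dens P μ₁ π g)) g s a ∈ stdSimplex ℝ S :=
    fun g hg s a => hker g hg s a _ (dens_mem H hker hμ hπ g (le_of_lt hg))
  have hK' : ∀ g, g < H → ∀ s a,
      (fun g s a => P' g s a (dens P' μ₁ π g)) g s a ∈ stdSimplex ℝ S :=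
    fun g hg s a => hker' g hg s a _ (dens_mem H hker' hμ hπ g (le_of_lt hg))
  have hKh : ∀ g, g < h → ∀ s a,
      (fun g s a => P g s a (dens P μ₁ π g)) g s a ∈ stdSimplex ℝ S :=
    fun g hg => hK g (lt_of_lt_of_le hg hh)
  have hK'h : ∀ g, g < h → ∀ s a,
      (fun g s a => P' g s a (dens P' μ₁ π g)) g s a ∈ stdSimplex ℝ S :=
    fun g hg => hK' g (lt_of_lt_of_le hg hh)
  refine le_trans (chn_l1_le h hμ hexec hKh hK'h h le_rfl) ?_
  rw [dCond_eq_chn]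
  refine Finset.sum_le_sum_of_subset_of_nonneg (Finset.range_subset_range.mpr hh) ?_
  intro g hg _
  have hgH : g < H := Finset.mem_range.mp hg
  have hmem := chn_mem H hμ hexec hK g (le_of_lt hgH)
  refine Finset.sum_nonneg fun s _ => Finset.sum_nonneg fun a _ => ?_
  exact mul_nonneg (mul_nonneg (hmem.1 s) ((hexec g s).1 a)) (l1_nonneg _ _)

lemma key_t (H : ℕ) (P : ι → ℕ → S → A → (S → ℝ) → S → ℝ)
    (μ₁ : S → ℝ) (hμ₁ : μ₁ ∈ stdSimplex ℝ S)
    (hPker : ∀ m, IsKernel H (P m))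
    (L_T : ℝ) (hLT : 0 ≤ L_T)
    (hPlip : ∀ m, ∀ h, h < H → ∀ s a, ∀ μ ∈ stdSimplex ℝ S, ∀ μ' ∈ stdSimplex ℝ S,
      l1 (P m h s a μ) (P m h s a μ') ≤ L_T * l1 μ μ')
    (ε₀ : ℝ) (hε₀ : 0 ≤ ε₀) (εb : ℝ) (hεb : 0 ≤ εb)
    (hεb1 : 2 * H * (H + 1) * ((1 + L_T) ^ H - 1) * εb ≤ ε₀)
    (hεb2 : 2 * H * εb ≤ ε₀)
    (πstar πt σ : ℕ → S → A → ℝ)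
    (hπstar : IsPolicy πstar) (hπt : IsPolicy πt) (hσ : IsPolicy σ)
    (hclose : ∀ h, h < H → ∀ s, l1 (πstar h s) (πt h s) ≤ 2 * εb)
    (Ms Mt m' : ι)
    (hA : ∀ pit, IsPolicy pit →
      dCond H (P Ms) (P m') μ₁ πstar pit ≤ ε₀ ∧ dCond H (P m') (P Ms) μ₁ πstar pit ≤ ε₀)
    (hB : ∀ pit, IsPolicy pit →
      dCond H (P Mt) (P m') μ₁ πt pit ≤ ε₀ ∧ dCond H (P m') (P Mt) μ₁ πt pit ≤ ε₀) :
    (∀ h, h ≤ H → l1 (dens (P Ms) μ₁ πstar h) (dens (P Mt) μ₁ πt h) ≤ 4 * ε₀) ∧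
    (∑ h ∈ Finset.range H, ∑ s, ∑ a,
        chn (fun g s a => P Ms g s a (dens (P Ms) μ₁ πstar g)) μ₁ σ h s * σ h s a *
          l1 (P Ms h s a (dens (P Ms) μ₁ πstar h)) (P Mt h s a (dens (P Mt) μ₁ πt h))
      ≤ (H + 3) * ε₀) := by
  -- numeric abbreviations
  set X : ℝ := (1 + L_T) ^ H - 1 with hXdef
  have hX0 : 0 ≤ X := by
    have : (1:ℝ) ≤ (1 + L_T) ^ H := one_le_pow₀ (by linarith)
    simp [hXdef]; linarith
  set β : ℝ := 2 * εb * X with hβdef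
  have hβ0 : 0 ≤ β := by positivity
  have hβ : (H : ℝ) * ((H : ℝ) + 1) * β ≤ ε₀ := by
    have : 2 * (H:ℝ) * ((H:ℝ) + 1) * X * εb = (H:ℝ) * ((H:ℝ)+1) * β := by
      rw [hβdef]; ring
    linarith [hεb1, this.symm.le, this.le]
  have hHβ : (H : ℝ) * β ≤ ε₀ := by nlinarith
  -- geometric quantities
  have hc : ∀ h, h ≤ H → 2 * εb * ∑ j ∈ Finset.range h, (1 + L_T) ^ j ≤
      2 * (H:ℝ) * εb + (H:ℝ) * β := by
    intro h hh
    have h1 := geom_sum_le H h hh hLT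
    have h2 : (h : ℝ) ≤ (H : ℝ) := Nat.cast_le.mpr hh
    have h3 : (0:ℝ) ≤ (1 + L_T)^H := by positivity
    have : 2 * εb * ∑ j ∈ Finset.range h, (1 + L_T) ^ j ≤ 2 * εb * ((H:ℝ) * (1 + L_T)^H) := by
      have := mul_le_mul_of_nonneg_left h1 (by positivity : (0:ℝ) ≤ 2 * εb)
      refine le_trans this ?_
      have := mul_le_mul_of_nonneg_right h2 h3
      nlinarith
    have heq : 2 * εb * ((H:ℝ) * (1 + L_T)^H) = 2 * (H:ℝ) * εb + (H:ℝ) * β := by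
      rw [hβdef, hXdef]; ring
    linarith
  have hβh : ∀ h, h ≤ H → L_T * (2 * εb * ∑ j ∈ Finset.range h, (1 + L_T) ^ j) ≤ β := by
    intro h hh
    have h1 := geom_sum_le' H h hh hLT
    have h2 : L_T * ∑ j ∈ Finset.range h, (1 + L_T) ^ j ≤ X := by
      rw [hXdef, ← geom_mul_eq H L_T]
      exact mul_le_mul_of_nonneg_left h1 hLT
    have : L_T * (2 * εb * ∑ j ∈ Finset.range h, (1 + L_T) ^ j)
        = 2 * εb * (L_T * ∑ j ∈ Finset.range h, (1 + L_T) ^ j) := by ring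
    rw [this]
    calc 2 * εb * (L_T * ∑ j ∈ Finset.range h, (1 + L_T) ^ j) ≤ 2 * εb * X :=
          mul_le_mul_of_nonneg_left h2 (by positivity)
      _ = β := hβdef.symm
  -- density perturbation in m'
  have dpert : ∀ h, h ≤ H → l1 (dens (P m') μ₁ πstar h) (dens (P m') μ₁ πt h) ≤
      2 * εb * ∑ j ∈ Finset.range h, (1 + L_T) ^ j :=
    dens_pert H (hPker m') hLT (hPlip m') hμ₁ hπstar hπt (by positivity) hclose
  -- density model differences
  have d12 : ∀ h, h ≤ H → l1 (dens (P Ms) μ₁ πstar h) (dens (P m') μ₁ πstar h) ≤ ε₀ := by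
    intro h hh
    rw [dens_eq_chn (P Ms), dens_eq_chn (P m')]
    exact le_trans (chn_l1_le_dCond H (hPker Ms) (hPker m') hμ₁ hπstar hπstar hπstar hπstar h hh)
      ((hA πstar hπstar).1)
  have d34 : ∀ h, h ≤ H → l1 (dens (P m') μ₁ πt h) (dens (P Mt) μ₁ πt h) ≤ ε₀ := by
    intro h hh
    rw [dens_eq_chn (P m'), dens_eq_chn (P Mt)]
    exact le_trans (chn_l1_le_dCond H (hPker m') (hPker Mt) hμ₁ hπt hπt hπt hπt h hh)
      ((hB πt hπt).2)
  -- part 1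
  have part1 : ∀ h, h ≤ H → l1 (dens (P Ms) μ₁ πstar h) (dens (P Mt) μ₁ πt h) ≤ 4 * ε₀ := by
    intro h hh
    have tri : l1 (dens (P Ms) μ₁ πstar h) (dens (P Mt) μ₁ πt h) ≤
        l1 (dens (P Ms) μ₁ πstar h) (dens (P m') μ₁ πstar h) +
        (l1 (dens (P m') μ₁ πstar h) (dens (P m') μ₁ πt h) +
         l1 (dens (P m') μ₁ πt h) (dens (P Mt) μ₁ πt h)) := by
      refine le_trans (l1_triangle _ (dens (P m') μ₁ πstar h) _) ?_
      gcongr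
      exact l1_triangle _ _ _
    have := hc h hh
    have := dpert h hh
    have := d12 h hh
    have := d34 h hh
    linarith
  refine ⟨part1, ?_⟩
  -- kernels
  set K1 : ℕ → S → A → S → ℝ := fun g s a => P Ms g s a (dens (P Ms) μ₁ πstar g) with hK1def
  set K2 : ℕ → S → A → S → ℝ := fun g s a => P m' g s a (dens (P m') μ₁ πstar g) with hK2def
  set K3 : ℕ → S → A → S → ℝ := fun g s a => P m' g s a (dens (P m') μ₁ πt g) with hK3def
  set K4 : ℕ → S → A → S → ℝ := fun g s a => P Mt g s a (dens (P Mt) μ₁ πt g) with hK4def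
  have hK1 : ∀ g, g < H → ∀ s a, K1 g s a ∈ stdSimplex ℝ S := fun g hg s a =>
    hPker Ms g hg s a _ (dens_mem H (hPker Ms) hμ₁ hπstar g (le_of_lt hg))
  have hK2 : ∀ g, g < H → ∀ s a, K2 g s a ∈ stdSimplex ℝ S := fun g hg s a =>
    hPker m' g hg s a _ (dens_mem H (hPker m') hμ₁ hπstar g (le_of_lt hg))
  have hK3 : ∀ g, g < H → ∀ s a, K3 g s a ∈ stdSimplex ℝ S := fun g hg s a =>
    hPker m' g hg s a _ (dens_mem H (hPker m') hμ₁ hπt g (le_of_lt hg))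
  have hK4 : ∀ g, g < H → ∀ s a, K4 g s a ∈ stdSimplex ℝ S := fun g hg s a =>
    hPker Mt g hg s a _ (dens_mem H (hPker Mt) hμ₁ hπt g (le_of_lt hg))
  -- chains
  set ν1 : ℕ → S → ℝ := chn K1 μ₁ σ with hν1def
  set ν2 : ℕ → S → ℝ := chn K2 μ₁ σ with hν2def
  set ν3 : ℕ → S → ℝ := chn K3 μ₁ σ with hν3def
  have hν1m : ∀ h, h ≤ H → ν1 h ∈ stdSimplex ℝ S := chn_mem H hμ₁ hσ hK1
  have hν2m : ∀ h, h ≤ H → ν2 h ∈ stdSimplex ℝ S := chn_mem H hμ₁ hσ hK2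
  have hν3m : ∀ h, h ≤ H → ν3 h ∈ stdSimplex ℝ S := chn_mem H hμ₁ hσ hK3
  -- pointwise kernel bound K2 vs K3
  have k23 : ∀ h, h < H → ∀ s a, l1 (K2 h s a) (K3 h s a) ≤ β := by
    intro h hh s a
    have hm := dens_mem H (hPker m') hμ₁ hπstar h (le_of_lt hh)
    have hm' := dens_mem H (hPker m') hμ₁ hπt h (le_of_lt hh)
    have := hPlip m' h hh s a _ hm _ hm'
    refine le_trans this (le_trans ?_ (hβh h (le_of_lt hh)))
    exact mul_le_mul_of_nonneg_left (dpert h (le_of_lt hh)) hLT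
  -- chain distances
  have cd12 : ∀ h, h ≤ H → l1 (ν1 h) (ν2 h) ≤ ε₀ := by
    intro h hh
    exact le_trans (chn_l1_le_dCond H (hPker Ms) (hPker m') hμ₁ hπstar hπstar hσ hπstar h hh)
      ((hA σ hσ).1)
  have cd23 : ∀ h, h ≤ H → l1 (ν2 h) (ν3 h) ≤ (H : ℝ) * β := by
    intro h hh
    have hK2h : ∀ g, g < h → ∀ s a, K2 g s a ∈ stdSimplex ℝ S :=
      fun g hg => hK2 g (lt_of_lt_of_le hg hh)
    have hK3h : ∀ g, g < h → ∀ s a, K3 g s a ∈ stdSimplex ℝ S :=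
      fun g hg => hK3 g (lt_of_lt_of_le hg hh)
    refine le_trans (chn_l1_le h hμ₁ hσ hK2h hK3h h le_rfl) ?_
    calc ∑ g ∈ Finset.range h, ∑ s, ∑ a, ν2 g s * σ g s a * l1 (K2 g s a) (K3 g s a)
        ≤ ∑ g ∈ Finset.range h, β := by
          refine Finset.sum_le_sum fun g hg => ?_
          have hgh : g < h := Finset.mem_range.mp hg
          have hgH : g < H := lt_of_lt_of_le hgh hh
          have hm := hν2m g (le_of_lt hgH)
          exact exp_le_of_le hm.1 hm.2 (σA := σ g) (hσ g) (fun s a => k23 g hgH s a)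
      _ = (h : ℝ) * β := by rw [Finset.sum_const, Finset.card_range, nsmul_eq_mul]
      _ ≤ (H : ℝ) * β := by
          have : (h:ℝ) ≤ (H:ℝ) := Nat.cast_le.mpr hh
          nlinarith
  have cd13 : ∀ h, h ≤ H → l1 (ν1 h) (ν3 h) ≤ ε₀ + (H : ℝ) * β := by
    intro h hh
    have := l1_triangle (ν1 h) (ν2 h) (ν3 h)
    have := cd12 h hh
    have := cd23 h hh
    linarith
  -- the three expectation sums
  have sumE12 : ∑ h ∈ Finset.range H, ∑ s, ∑ a, ν1 h s * σ h s a * l1 (K1 h s a) (K2 h s a)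
      ≤ ε₀ := by
    have := (hA σ hσ).1
    rw [dCond_eq_chn] at this
    exact this
  have sumE23 : ∑ h ∈ Finset.range H, ∑ s, ∑ a, ν1 h s * σ h s a * l1 (K2 h s a) (K3 h s a)
      ≤ (H : ℝ) * β := by
    calc ∑ h ∈ Finset.range H, ∑ s, ∑ a, ν1 h s * σ h s a * l1 (K2 h s a) (K3 h s a)
        ≤ ∑ h ∈ Finset.range H, β := by
          refine Finset.sum_le_sum fun h hh => ?_
          have hhH : h < H := Finset.mem_range.mp hh
          have hm := hν1m h (le_of_lt hhH)
          exact exp_le_of_le hm.1 hm.2 (σA := σ h) (hσ h) (fun s a => k23 h hhH s a)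
      _ = (H : ℝ) * β := by rw [Finset.sum_const, Finset.card_range, nsmul_eq_mul]
  have sumE34 : ∑ h ∈ Finset.range H, ∑ s, ∑ a, ν1 h s * σ h s a * l1 (K3 h s a) (K4 h s a)
      ≤ ε₀ + (H : ℝ) * (ε₀ + (H : ℝ) * β) := by
    have perh : ∀ h ∈ Finset.range H,
        ∑ s, ∑ a, ν1 h s * σ h s a * l1 (K3 h s a) (K4 h s a) ≤
        (∑ s, ∑ a, ν3 h s * σ h s a * l1 (K3 h s a) (K4 h s a)) + (ε₀ + (H : ℝ) * β) := by
      intro h hh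
      have hhH : h < H := Finset.mem_range.mp hh
      have hm1 := hν1m h (le_of_lt hhH)
      have hm3 := hν3m h (le_of_lt hhH)
      have hshift := exp_shift (σA := σ h) (g := fun s a => l1 (K3 h s a) (K4 h s a))
        hm1.2 hm3.2 (hσ h) (fun s a => l1_nonneg _ _)
        (fun s a => l1_le_two (hK3 h hhH s a) (hK4 h hhH s a))
      have := cd13 h (le_of_lt hhH)
      linarith
    calc ∑ h ∈ Finset.range H, ∑ s, ∑ a, ν1 h s * σ h s a * l1 (K3 h s a) (K4 h s a)
        ≤ ∑ h ∈ Finset.range H,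
            ((∑ s, ∑ a, ν3 h s * σ h s a * l1 (K3 h s a) (K4 h s a)) + (ε₀ + (H : ℝ) * β)) :=
          Finset.sum_le_sum perh
      _ = (∑ h ∈ Finset.range H, ∑ s, ∑ a, ν3 h s * σ h s a * l1 (K3 h s a) (K4 h s a)) +
            (H : ℝ) * (ε₀ + (H : ℝ) * β) := by
          rw [Finset.sum_add_distrib, Finset.sum_const, Finset.card_range, nsmul_eq_mul]
      _ ≤ ε₀ + (H : ℝ) * (ε₀ + (H : ℝ) * β) := by
          have := (hB σ hσ).2
          rw [dCond_eq_chn] at this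
          gcongr
  -- combine
  have main : ∑ h ∈ Finset.range H, ∑ s, ∑ a, ν1 h s * σ h s a * l1 (K1 h s a) (K4 h s a)
      ≤ (∑ h ∈ Finset.range H, ∑ s, ∑ a, ν1 h s * σ h s a * l1 (K1 h s a) (K2 h s a)) +
        ((∑ h ∈ Finset.range H, ∑ s, ∑ a, ν1 h s * σ h s a * l1 (K2 h s a) (K3 h s a)) +
         (∑ h ∈ Finset.range H, ∑ s, ∑ a, ν1 h s * σ h s a * l1 (K3 h s a) (K4 h s a))) := by
    rw [← Finset.sum_add_distrib, ← Finset.sum_add_distrib]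
    refine Finset.sum_le_sum fun h hh => ?_
    have hhH : h < H := Finset.mem_range.mp hh
    have hm1 := hν1m h (le_of_lt hhH)
    have step1 : ∑ s, ∑ a, ν1 h s * σ h s a * l1 (K1 h s a) (K4 h s a) ≤
        ∑ s, ∑ a, ν1 h s * σ h s a *
          (l1 (K1 h s a) (K2 h s a) + (l1 (K2 h s a) (K3 h s a) + l1 (K3 h s a) (K4 h s a))) := by
      refine exp_mono hm1.1 (fun s a => (hσ h s).1 a) fun s a => ?_
      have t1 := l1_triangle (K1 h s a) (K2 h s a) (K4 h s a)
      have t2 := l1_triangle (K2 h s a) (K3 h s a) (K4 h s a)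
      linarith
    refine le_trans step1 (le_of_eq ?_)
    simp only [mul_add, Finset.sum_add_distrib]
  have final := le_trans main (by linarith [sumE12, sumE23, sumE34] :
    (∑ h ∈ Finset.range H, ∑ s, ∑ a, ν1 h s * σ h s a * l1 (K1 h s a) (K2 h s a)) +
        ((∑ h ∈ Finset.range H, ∑ s, ∑ a, ν1 h s * σ h s a * l1 (K2 h s a) (K3 h s a)) +
         (∑ h ∈ Finset.range H, ∑ s, ∑ a, ν1 h s * σ h s a * l1 (K3 h s a) (K4 h s a))) ≤
      ε₀ + ((H:ℝ) * β + (ε₀ + (H : ℝ) * (ε₀ + (H : ℝ) * β))))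
  refine le_trans final ?_
  nlinarith [hβ, hHβ, hε₀]

end BridgeAux5
section BridgeAux6

variable {S A : Type*} [Fintype S] [Fintype A]

lemma l1_convex {X ι' : Type*} [Fintype X] (T : Finset ι') (lam : ι' → ℝ)
    (hlam0 : ∀ t ∈ T, 0 ≤ lam t) (hlam1 : ∑ t ∈ T, lam t = 1)
    (p : X → ℝ) (q : ι' → X → ℝ) :
    l1 p (fun x => ∑ t ∈ T, lam t * q t x) ≤ ∑ t ∈ T, lam t * l1 p (q t) := by
  unfold l1
  have key : ∀ x, |p x - ∑ t ∈ T, lam t * q t x| ≤ ∑ t ∈ T, lam t * |p x - q t x| := by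
    intro x
    have hp : p x - ∑ t ∈ T, lam t * q t x = ∑ t ∈ T, lam t * (p x - q t x) := by
      have : ∑ t ∈ T, lam t * (p x - q t x) = (∑ t ∈ T, lam t) * p x - ∑ t ∈ T, lam t * q t x := by
        rw [Finset.sum_mul, ← Finset.sum_sub_distrib]
        exact Finset.sum_congr rfl fun t _ => by ring
      rw [this, hlam1, one_mul]
    rw [hp]
    calc |∑ t ∈ T, lam t * (p x - q t x)| ≤ ∑ t ∈ T, |lam t * (p x - q t x)| :=
          Finset.abs_sum_le_sum_abs _ _
      _ = ∑ t ∈ T, lam t * |p x - q t x| := Finset.sum_congr rfl fun t ht => by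
          rw [abs_mul, abs_of_nonneg (hlam0 t ht)]
  calc ∑ x, |p x - ∑ t ∈ T, lam t * q t x| ≤ ∑ x, ∑ t ∈ T, lam t * |p x - q t x| :=
        Finset.sum_le_sum fun x _ => key x
    _ = ∑ t ∈ T, ∑ x, lam t * |p x - q t x| := Finset.sum_comm
    _ = ∑ t ∈ T, lam t * l1 p (q t) := Finset.sum_congr rfl fun t _ => by
        rw [← Finset.mul_sum]; rfl

lemma conv_abs_le {ι' : Type*} (T : Finset ι') (lam : ι' → ℝ)
    (hlam0 : ∀ t ∈ T, 0 ≤ lam t) (hlam1 : ∑ t ∈ T, lam t = 1)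
    (c : ι' → ℝ) (x : ℝ) (C : ℝ) (hc : ∀ t ∈ T, 0 < lam t → |x - c t| ≤ C) :
    |x - ∑ t ∈ T, lam t * c t| ≤ C := by
  have hp : x - ∑ t ∈ T, lam t * c t = ∑ t ∈ T, lam t * (x - c t) := by
    have : ∑ t ∈ T, lam t * (x - c t) = (∑ t ∈ T, lam t) * x - ∑ t ∈ T, lam t * c t := by
      rw [Finset.sum_mul, ← Finset.sum_sub_distrib]
      exact Finset.sum_congr rfl fun t _ => by ring
    rw [this, hlam1, one_mul]
  rw [hp]
  calc |∑ t ∈ T, lam t * (x - c t)| ≤ ∑ t ∈ T, |lam t * (x - c t)| :=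
        Finset.abs_sum_le_sum_abs _ _
    _ ≤ ∑ t ∈ T, lam t * C := by
        refine Finset.sum_le_sum fun t ht => ?_
        rw [abs_mul, abs_of_nonneg (hlam0 t ht)]
        rcases (hlam0 t ht).lt_or_eq with hpos | hzero
        · exact mul_le_mul_of_nonneg_left (hc t ht hpos) (hlam0 t ht)
        · rw [← hzero]; simp
    _ = C := by rw [← Finset.sum_mul, hlam1, one_mul]

lemma conv_mem_Icc {ι' : Type*} (T : Finset ι') (lam : ι' → ℝ)
    (hlam0 : ∀ t ∈ T, 0 ≤ lam t) (hlam1 : ∑ t ∈ T, lam t = 1)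
    (c : ι' → ℝ) (lo hi : ℝ) (hc : ∀ t ∈ T, c t ∈ Set.Icc lo hi) :
    (∑ t ∈ T, lam t * c t) ∈ Set.Icc lo hi := by
  constructor
  · calc lo = ∑ t ∈ T, lam t * lo := by rw [← Finset.sum_mul, hlam1, one_mul]
      _ ≤ ∑ t ∈ T, lam t * c t := Finset.sum_le_sum fun t ht =>
          mul_le_mul_of_nonneg_left (hc t ht).1 (hlam0 t ht)
  · calc ∑ t ∈ T, lam t * c t ≤ ∑ t ∈ T, lam t * hi := Finset.sum_le_sum fun t ht =>
          mul_le_mul_of_nonneg_left (hc t ht).2 (hlam0 t ht)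
      _ = hi := by rw [← Finset.sum_mul, hlam1, one_mul]

lemma exp_abs_le {ν : S → ℝ} {σA : S → A → ℝ} {f : S → A → ℝ} {C : ℝ}
    (hν0 : ∀ s, 0 ≤ ν s) (hν1 : ∑ s, ν s = 1)
    (hσ : ∀ s, (∀ a, 0 ≤ σA s a) ∧ ∑ a, σA s a = 1)
    (hf : ∀ s a, |f s a| ≤ C) :
    |∑ s, ∑ a, ν s * σA s a * f s a| ≤ C := by
  calc |∑ s, ∑ a, ν s * σA s a * f s a| ≤ ∑ s, |∑ a, ν s * σA s a * f s a| :=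
        Finset.abs_sum_le_sum_abs _ _
    _ ≤ ∑ s, ∑ a, |ν s * σA s a * f s a| :=
        Finset.sum_le_sum fun s _ => Finset.abs_sum_le_sum_abs _ _
    _ = ∑ s, ∑ a, ν s * σA s a * |f s a| := by
        refine Finset.sum_congr rfl fun s _ => Finset.sum_congr rfl fun a _ => ?_
        rw [abs_mul, abs_mul, abs_of_nonneg (hν0 s), abs_of_nonneg ((hσ s).1 a)]
    _ ≤ C := exp_le_of_le hν0 hν1 hσ hf

lemma exp_diff_abs_le {ν ν' : S → ℝ} {σA : S → A → ℝ} {g : S → A → ℝ} {C : ℝ}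
    (hC : 0 ≤ C)
    (hσ : ∀ s, (∀ a, 0 ≤ σA s a) ∧ ∑ a, σA s a = 1)
    (hg : ∀ s a, |g s a| ≤ C) :
    |(∑ s, ∑ a, ν s * σA s a * g s a) - ∑ s, ∑ a, ν' s * σA s a * g s a| ≤ C * l1 ν ν' := by
  have hGb : ∀ s, |∑ a, σA s a * g s a| ≤ C := by
    intro s
    calc |∑ a, σA s a * g s a| ≤ ∑ a, |σA s a * g s a| := Finset.abs_sum_le_sum_abs _ _
      _ = ∑ a, σA s a * |g s a| := Finset.sum_congr rfl fun a _ => by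
          rw [abs_mul, abs_of_nonneg ((hσ s).1 a)]
      _ ≤ ∑ a, σA s a * C := Finset.sum_le_sum fun a _ =>
          mul_le_mul_of_nonneg_left (hg s a) ((hσ s).1 a)
      _ = C := by rw [← Finset.sum_mul, (hσ s).2, one_mul]
  have hrw : ∀ (ρ : S → ℝ), ∑ s, ∑ a, ρ s * σA s a * g s a
      = ∑ s, ρ s * ∑ a, σA s a * g s a := by
    intro ρ
    refine Finset.sum_congr rfl fun s _ => ?_
    rw [Finset.mul_sum]
    exact Finset.sum_congr rfl fun a _ => by ring
  rw [hrw ν, hrw ν', ← Finset.sum_sub_distrib]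
  calc |∑ s, (ν s * ∑ a, σA s a * g s a - ν' s * ∑ a, σA s a * g s a)|
      ≤ ∑ s, |ν s * (∑ a, σA s a * g s a) - ν' s * ∑ a, σA s a * g s a| :=
        Finset.abs_sum_le_sum_abs _ _
    _ = ∑ s, |ν s - ν' s| * |∑ a, σA s a * g s a| := by
        refine Finset.sum_congr rfl fun s _ => ?_
        rw [← sub_mul, abs_mul]
    _ ≤ ∑ s, |ν s - ν' s| * C := Finset.sum_le_sum fun s _ =>
        mul_le_mul_of_nonneg_left (hGb s) (abs_nonneg _)
    _ = C * l1 ν ν' := by rw [← Finset.sum_mul, mul_comm]; rfl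

end BridgeAux6
/-- **A Nash equilibrium of the bridge model is an approximate Nash
equilibrium of its central model.** In the bridge-model setting, if `π*` is a Nash
equilibrium of the bridge model, then its Nash-equilibrium gap in the central model
`M* = M_Ctr^{π*}` is at most `2(1 + L_r·H)(H+4)·ε₀`. -/
theorem bridge_NE_close_to_central_NE {S A ι : Type*} [Fintype S] [Fintype A] [Fintype ι]
    [Nonempty ι] (H : ℕ)
    (P : ι → ℕ → S → A → (S → ℝ) → S → ℝ) (r : ℕ → S → A → (S → ℝ) → ℝ)
    (μ₁ : S → ℝ) (hμ₁ : μ₁ ∈ stdSimplex ℝ S)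
    (hPker : ∀ m, IsKernel H (P m))
    (L_T L_r : ℝ) (hLT : 0 < L_T) (hLr : 0 < L_r)
    (hPlip : ∀ m, ∀ h, h < H → ∀ s a, ∀ μ ∈ stdSimplex ℝ S, ∀ μ' ∈ stdSimplex ℝ S,
      l1 (P m h s a μ) (P m h s a μ') ≤ L_T * l1 μ μ')
    (hrbd : ∀ h, h < H → ∀ s a (μ : S → ℝ), μ ∈ stdSimplex ℝ S →
      r h s a μ ∈ Set.Icc (0 : ℝ) (1 / (H : ℝ)))
    (hrlip : ∀ h, h < H → ∀ s a, ∀ μ ∈ stdSimplex ℝ S, ∀ μ' ∈ stdSimplex ℝ S,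
      |r h s a μ - r h s a μ'| ≤ L_r * l1 μ μ')
    (ε₀ : ℝ) (hε₀ : 0 < ε₀)
    (MCtr : (ℕ → S → A → ℝ) → ι)
    (hCtrMax : ∀ π, IsPolicy π → ∀ m : ι,
      (nbhd H P μ₁ ε₀ π m).ncard ≤ (nbhd H P μ₁ ε₀ π (MCtr π)).ncard)
    (hHalf : ∀ π, IsPolicy π →
      Fintype.card ι < 2 * (nbhd H P μ₁ ε₀ π (MCtr π)).ncard)
    (εb : ℝ) (hεb : 0 < εb)
    (hεb1 : 2 * H * (H + 1) * ((1 + L_T) ^ H - 1) * εb ≤ ε₀)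
    (hεb2 : 2 * H * εb ≤ ε₀)
    (Pcov : Finset (ℕ → S → A → ℝ)) (hPcovpol : ∀ πt ∈ Pcov, IsPolicy πt)
    (hcover : ∀ π : ℕ → S → A → ℝ, IsPolicy π →
      ∃ πt ∈ Pcov, ∀ h, h < H → ∀ s, l1 (π h s) (πt h s) ≤ εb)
    (PBr : ℕ → S → A → (ℕ → S → A → ℝ) → S → ℝ)
    (rBr : ℕ → S → A → (ℕ → S → A → ℝ) → ℝ)
    (hPBr : ∀ h s a π s', PBr h s a π s' =
      (∑ πt ∈ Pcov, max (2 * εb - dInf H π πt) 0 *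
          P (MCtr πt) h s a (dens (P (MCtr πt)) μ₁ πt h) s') /
        ∑ πt ∈ Pcov, max (2 * εb - dInf H π πt) 0)
    (hrBr : ∀ h s a π, rBr h s a π =
      (∑ πt ∈ Pcov, max (2 * εb - dInf H π πt) 0 *
          r h s a (dens (P (MCtr πt)) μ₁ πt h)) /
        ∑ πt ∈ Pcov, max (2 * εb - dInf H π πt) 0)
    -- `π*` is a Nash equilibrium of the bridge model
    (πstar : ℕ → S → A → ℝ) (hπstar : IsPolicy πstar)
    (hNEBr : ∀ πt, IsPolicy πt →
      Jpam H PBr rBr μ₁ πt πstar ≤ Jpam H PBr rBr μ₁ πstar πstar) :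
    -- then `π*` has a small NE gap in the central model `M* = M_Ctr^{π*}`
    ∀ πt, IsPolicy πt →
      Jret H (P (MCtr πstar)) r μ₁ πt πstar - Jret H (P (MCtr πstar)) r μ₁ πstar πstar ≤
        2 * (1 + L_r * H) * (H + 4) * ε₀ := by
  intro πt0 hπt0
  rcases Nat.eq_zero_or_pos H with hH0 | hHpos
  · subst hH0
    simp only [Jret, expF, Finset.range_zero, Finset.sum_empty]
    have : (2:ℝ) * (1 + L_r * (0:ℕ)) * ((0:ℕ) + 4) * ε₀ = 8 * ε₀ := by ring
    rw [this]
    linarith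
  have hH1 : (1:ℝ) ≤ (H:ℝ) := by exact_mod_cast hHpos
  have hHne : (H:ℝ) ≠ 0 := by positivity
  -- policies as simplex members
  have hpolmem : ∀ (π : ℕ → S → A → ℝ), IsPolicy π → ∀ h s, π h s ∈ stdSimplex ℝ A :=
    fun π hπ h s => ⟨(hπ h s).1, (hπ h s).2⟩
  -- weights
  set w : (ℕ → S → A → ℝ) → ℝ := fun pit => max (2 * εb - dInf H πstar pit) 0 with hwdef
  have hw0 : ∀ pit, 0 ≤ w pit := fun pit => le_max_right _ _
  set W : ℝ := ∑ pit ∈ Pcov, w pit with hWdef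
  have hWpos : 0 < W := by
    obtain ⟨πc, hπcPcov, hπcl1⟩ := hcover πstar hπstar
    have hds : dInf H πstar πc ≤ εb := by
      refine Real.sSup_le ?_ hεb.le
      rintro x ⟨h, hh, s, rfl⟩
      exact hπcl1 h hh s
    have hwc : εb ≤ w πc := by
      rw [hwdef]
      refine le_trans ?_ (le_max_left _ _)
      linarith
    have : w πc ≤ W := Finset.single_le_sum (fun t _ => hw0 t) hπcPcov
    linarith
  -- dInf controls pointwise l1 of policies
  have hdle : ∀ pit, IsPolicy pit → 0 < w pit → ∀ h, h < H → ∀ s,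
      l1 (πstar h s) (pit h s) ≤ 2 * εb := by
    intro pit hpit hpos h hh s
    have hlt : dInf H πstar pit < 2 * εb := by
      by_contra hcon
      push_neg at hcon
      have : w pit = 0 := by rw [hwdef]; simp; linarith
      rw [this] at hpos; exact lt_irrefl 0 hpos
    have hbdd : BddAbove {x : ℝ | ∃ h < H, ∃ s : S, x = l1 (πstar h s) (pit h s)} := by
      refine ⟨2, ?_⟩
      rintro x ⟨h', hh', s', rfl⟩
      exact l1_le_two (hpolmem πstar hπstar h' s') (hpolmem pit hpit h' s')
    have hmem : l1 (πstar h s) (pit h s) ∈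
        {x : ℝ | ∃ h < H, ∃ s : S, x = l1 (πstar h s) (pit h s)} := ⟨h, hh, s, rfl⟩
    have := le_csSup hbdd hmem
    exact le_trans this hlt.le
  -- overlap of neighborhoods
  have overlap : ∀ pit, IsPolicy pit → ∃ m',
      m' ∈ nbhd H P μ₁ ε₀ πstar (MCtr πstar) ∧ m' ∈ nbhd H P μ₁ ε₀ pit (MCtr pit) := by
    intro pit hpit
    have h1 := hHalf πstar hπstar
    have h2 := hHalf pit hpit
    have hu : (nbhd H P μ₁ ε₀ πstar (MCtr πstar) ∪ nbhd H P μ₁ ε₀ pit (MCtr pit)).ncard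
        ≤ Fintype.card ι := by
      have huniv : (Set.univ : Set ι).ncard = Fintype.card ι := by
        rw [Set.ncard_univ, Nat.card_eq_fintype_card]
      rw [← huniv]
      exact Set.ncard_le_ncard (Set.subset_univ _) (Set.toFinite _)
    have hiu := Set.ncard_inter_add_ncard_union
      (nbhd H P μ₁ ε₀ πstar (MCtr πstar)) (nbhd H P μ₁ ε₀ pit (MCtr pit))
      (Set.toFinite _) (Set.toFinite _)
    have hpos : (nbhd H P μ₁ ε₀ πstar (MCtr πstar) ∩ nbhd H P μ₁ ε₀ pit (MCtr pit)).ncard ≠ 0 := by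
      omega
    obtain ⟨m', hm'⟩ := Set.nonempty_of_ncard_ne_zero hpos
    exact ⟨m', hm'.1, hm'.2⟩
  -- per-t density bound (independent of executed policy)
  have hA4 : ∀ pit ∈ Pcov, 0 < w pit → ∀ h, h ≤ H →
      l1 (dens (P (MCtr πstar)) μ₁ πstar h) (dens (P (MCtr pit)) μ₁ pit h) ≤ 4 * ε₀ := by
    intro pit hmem hpos h hh
    obtain ⟨m', hm1, hm2⟩ := overlap pit (hPcovpol pit hmem)
    exact (key_t H P μ₁ hμ₁ hPker L_T hLT.le hPlip ε₀ hε₀.le εb hεb.le hεb1 hεb2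
      πstar pit πstar hπstar (hPcovpol pit hmem) hπstar (hdle pit (hPcovpol pit hmem) hpos)
      (MCtr πstar) (MCtr pit) m' hm1 hm2).1 h hh
  -- mixture representations
  have hPBr' : ∀ h s a s', PBr h s a πstar s' =
      ∑ pit ∈ Pcov, w pit / W * P (MCtr pit) h s a (dens (P (MCtr pit)) μ₁ pit h) s' := by
    intro h s a s'
    simp only [hWdef, hwdef]
    rw [hPBr h s a πstar s', Finset.sum_div]
    exact Finset.sum_congr rfl fun t _ => mul_div_right_comm _ _ _
  have hrBr' : ∀ h s a, rBr h s a πstar =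
      ∑ pit ∈ Pcov, w pit / W * r h s a (dens (P (MCtr pit)) μ₁ pit h) := by
    intro h s a
    simp only [hWdef, hwdef]
    rw [hrBr h s a πstar, Finset.sum_div]
    exact Finset.sum_congr rfl fun t _ => mul_div_right_comm _ _ _
  have hlam0 : ∀ pit ∈ Pcov, 0 ≤ w pit / W := fun pit _ => div_nonneg (hw0 pit) hWpos.le
  have hlam1 : ∑ pit ∈ Pcov, w pit / W = 1 := by
    rw [← Finset.sum_div, ← hWdef, div_self hWpos.ne']
  have hdensT : ∀ pit ∈ Pcov, ∀ h, h < H → dens (P (MCtr pit)) μ₁ pit h ∈ stdSimplex ℝ S :=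
    fun pit hmem h hh => dens_mem (P := P (MCtr pit)) H (hPker (MCtr pit)) hμ₁ (hPcovpol pit hmem) h hh.le
  have hKBmem : ∀ h, h < H → ∀ s a, (PBr h s a πstar) ∈ stdSimplex ℝ S := by
    intro h hh s a
    constructor
    · intro s'
      rw [hPBr' h s a s']
      exact Finset.sum_nonneg fun t ht => mul_nonneg (hlam0 t ht)
        ((hPker _ h hh s a _ (hdensT t ht h hh)).1 s')
    · calc ∑ s', PBr h s a πstar s'
          = ∑ s', ∑ pit ∈ Pcov, w pit / W *
              P (MCtr pit) h s a (dens (P (MCtr pit)) μ₁ pit h) s' :=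
            Finset.sum_congr rfl fun s' _ => hPBr' h s a s'
        _ = ∑ pit ∈ Pcov, ∑ s', w pit / W *
              P (MCtr pit) h s a (dens (P (MCtr pit)) μ₁ pit h) s' := Finset.sum_comm
        _ = ∑ pit ∈ Pcov, w pit / W := by
            refine Finset.sum_congr rfl fun t ht => ?_
            rw [← Finset.mul_sum, (hPker _ h hh s a _ (hdensT t ht h hh)).2, mul_one]
        _ = 1 := hlam1
  have hrBIcc : ∀ h, h < H → ∀ s a, rBr h s a πstar ∈ Set.Icc (0:ℝ) (1/(H:ℝ)) := by
    intro h hh s a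
    rw [hrBr' h s a]
    exact conv_mem_Icc Pcov _ hlam0 hlam1 _ _ _ (fun t ht => hrbd h hh s a _ (hdensT t ht h hh))
  have hrdiff : ∀ h, h < H → ∀ s a,
      |r h s a (dens (P (MCtr πstar)) μ₁ πstar h) - rBr h s a πstar| ≤ 4 * L_r * ε₀ := by
    intro h hh s a
    rw [hrBr' h s a]
    refine conv_abs_le Pcov _ hlam0 hlam1 _ _ _ ?_
    intro t ht hpos
    have hwt : 0 < w t := by
      rcases (hw0 t).lt_or_eq with h' | h'
      · exact h'
      · exfalso; rw [← h'] at hpos; simp at hpos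
    have hls := hA4 t ht hwt h hh.le
    have hμs := dens_mem (P := P (MCtr πstar)) H (hPker (MCtr πstar)) hμ₁ hπstar h hh.le
    have hμt := hdensT t ht h hh
    have hlip := hrlip h hh s a _ hμs _ hμt
    have h4 : L_r * l1 (dens (P (MCtr πstar)) μ₁ πstar h) (dens (P (MCtr t)) μ₁ t h)
        ≤ L_r * (4 * ε₀) := mul_le_mul_of_nonneg_left hls hLr.le
    refine le_trans hlip (le_trans h4 (le_of_eq (by ring)))
  -- main claim: executed-policy-uniform bound on the bridge/central return gap
  have claim : ∀ σ, IsPolicy σ →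
      |Jret H (P (MCtr πstar)) r μ₁ σ πstar - Jpam H PBr rBr μ₁ σ πstar| ≤
        ((H:ℝ) + 3) * ε₀ + 4 * L_r * (H:ℝ) * ε₀ := by
    intro σ hσ
    set Ms := MCtr πstar with hMsdef
    set Kst : ℕ → S → A → S → ℝ := fun g s a => P Ms g s a (dens (P Ms) μ₁ πstar g) with hKstdef
    set KB : ℕ → S → A → S → ℝ := fun g s a => PBr g s a πstar with hKBdef
    have hKst : ∀ g, g < H → ∀ s a, Kst g s a ∈ stdSimplex ℝ S := fun g hg s a =>
      hPker Ms g hg s a _ (dens_mem (P := P Ms) H (hPker Ms) hμ₁ hπstar g hg.le)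
    have hKB : ∀ g, g < H → ∀ s a, KB g s a ∈ stdSimplex ℝ S := fun g hg s a => hKBmem g hg s a
    set ν := chn Kst μ₁ σ with hνdef
    set νB := chn KB μ₁ σ with hνBdef
    have hνm : ∀ h, h ≤ H → ν h ∈ stdSimplex ℝ S := chn_mem H hμ₁ hσ hKst
    have hνBm : ∀ h, h ≤ H → νB h ∈ stdSimplex ℝ S := chn_mem H hμ₁ hσ hKB
    have hJret : Jret H (P Ms) r μ₁ σ πstar =
        ∑ h ∈ Finset.range H, ∑ s, ∑ a, ν h s * σ h s a * r h s a (dens (P Ms) μ₁ πstar h) := by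
      unfold Jret expF
      exact Finset.sum_congr rfl fun h _ => by rw [densF_eq_chn]
    have hJpam : Jpam H PBr rBr μ₁ σ πstar =
        ∑ h ∈ Finset.range H, ∑ s, ∑ a, νB h s * σ h s a * rBr h s a πstar := by
      unfold Jpam
      exact Finset.sum_congr rfl fun h _ => by rw [densPam_eq_chn]
    have perT : ∀ pit ∈ Pcov, 0 < w pit →
        ∑ h ∈ Finset.range H, ∑ s, ∑ a, ν h s * σ h s a *
          l1 (Kst h s a) (P (MCtr pit) h s a (dens (P (MCtr pit)) μ₁ pit h)) ≤
        ((H:ℝ) + 3) * ε₀ := by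
      intro pit hmem hpos
      obtain ⟨m', hm1, hm2⟩ := overlap pit (hPcovpol pit hmem)
      exact (key_t H P μ₁ hμ₁ hPker L_T hLT.le hPlip ε₀ hε₀.le εb hεb.le hεb1 hεb2
        πstar pit σ hπstar (hPcovpol pit hmem) hσ (hdle pit (hPcovpol pit hmem) hpos)
        Ms (MCtr pit) m' hm1 hm2).2
    have kmix : ∀ h, h < H → ∀ s a, l1 (Kst h s a) (KB h s a) ≤
        ∑ pit ∈ Pcov, w pit / W *
          l1 (Kst h s a) (P (MCtr pit) h s a (dens (P (MCtr pit)) μ₁ pit h)) := by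
      intro h hh s a
      have hfun : KB h s a = fun s' => ∑ pit ∈ Pcov, w pit / W *
          P (MCtr pit) h s a (dens (P (MCtr pit)) μ₁ pit h) s' :=
        funext fun s' => hPBr' h s a s'
      rw [hfun]
      exact l1_convex Pcov _ hlam0 hlam1 _ _
    have swap : ∀ (F : (ℕ → S → A → ℝ) → ℕ → S → A → ℝ),
        (∑ h ∈ Finset.range H, ∑ s, ∑ a, ν h s * σ h s a *
          (∑ pit ∈ Pcov, w pit / W * F pit h s a))
        = ∑ pit ∈ Pcov, w pit / W *
            ∑ h ∈ Finset.range H, ∑ s, ∑ a, ν h s * σ h s a * F pit h s a := by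
      intro F
      calc (∑ h ∈ Finset.range H, ∑ s, ∑ a, ν h s * σ h s a *
            (∑ pit ∈ Pcov, w pit / W * F pit h s a))
          = ∑ h ∈ Finset.range H, ∑ s, ∑ a, ∑ pit ∈ Pcov,
              w pit / W * (ν h s * σ h s a * F pit h s a) := by
            refine Finset.sum_congr rfl fun h _ => Finset.sum_congr rfl fun s _ =>
              Finset.sum_congr rfl fun a _ => ?_
            rw [Finset.mul_sum]
            exact Finset.sum_congr rfl fun pit _ => by ring
        _ = ∑ h ∈ Finset.range H, ∑ s, ∑ pit ∈ Pcov, ∑ a,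
              w pit / W * (ν h s * σ h s a * F pit h s a) :=
            Finset.sum_congr rfl fun h _ => Finset.sum_congr rfl fun s _ => Finset.sum_comm
        _ = ∑ h ∈ Finset.range H, ∑ pit ∈ Pcov, ∑ s, ∑ a,
              w pit / W * (ν h s * σ h s a * F pit h s a) :=
            Finset.sum_congr rfl fun h _ => Finset.sum_comm
        _ = ∑ pit ∈ Pcov, ∑ h ∈ Finset.range H, ∑ s, ∑ a,
              w pit / W * (ν h s * σ h s a * F pit h s a) := Finset.sum_comm
        _ = ∑ pit ∈ Pcov, w pit / W *
              ∑ h ∈ Finset.range H, ∑ s, ∑ a, ν h s * σ h s a * F pit h s a := by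
            refine Finset.sum_congr rfl fun pit _ => ?_
            rw [Finset.mul_sum]
            refine Finset.sum_congr rfl fun h _ => ?_
            rw [Finset.mul_sum]
            refine Finset.sum_congr rfl fun s _ => ?_
            rw [Finset.mul_sum]
    have SumKB : ∑ h ∈ Finset.range H, ∑ s, ∑ a, ν h s * σ h s a * l1 (Kst h s a) (KB h s a)
        ≤ ((H:ℝ) + 3) * ε₀ := by
      have step1 : ∑ h ∈ Finset.range H, ∑ s, ∑ a, ν h s * σ h s a * l1 (Kst h s a) (KB h s a)
          ≤ ∑ h ∈ Finset.range H, ∑ s, ∑ a, ν h s * σ h s a *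
              (∑ pit ∈ Pcov, w pit / W *
                l1 (Kst h s a) (P (MCtr pit) h s a (dens (P (MCtr pit)) μ₁ pit h))) := by
        refine Finset.sum_le_sum fun h hh => ?_
        have hhH : h < H := Finset.mem_range.mp hh
        exact exp_mono (hνm h hhH.le).1 (fun s a => (hσ h s).1 a) (fun s a => kmix h hhH s a)
      refine le_trans step1 ?_
      rw [swap (fun pit h s a =>
        l1 (Kst h s a) (P (MCtr pit) h s a (dens (P (MCtr pit)) μ₁ pit h)))]
      calc (∑ pit ∈ Pcov, w pit / W * ∑ h ∈ Finset.range H, ∑ s, ∑ a, ν h s * σ h s a *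
              l1 (Kst h s a) (P (MCtr pit) h s a (dens (P (MCtr pit)) μ₁ pit h)))
          ≤ ∑ pit ∈ Pcov, w pit / W * (((H:ℝ) + 3) * ε₀) := by
            refine Finset.sum_le_sum fun t ht => ?_
            rcases (hw0 t).lt_or_eq with hpos | hzero
            · exact mul_le_mul_of_nonneg_left (perT t ht hpos) (hlam0 t ht)
            · rw [← hzero]; simp
        _ = ((H:ℝ) + 3) * ε₀ := by rw [← Finset.sum_mul, hlam1, one_mul]
    have chainB : ∀ h, h ≤ H → l1 (ν h) (νB h) ≤ ((H:ℝ) + 3) * ε₀ := by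
      intro h hh
      have hb := chn_l1_le (K := Kst) (K' := KB) h hμ₁ hσ
        (fun g hg s a => hKst g (lt_of_lt_of_le hg hh) s a)
        (fun g hg s a => hKB g (lt_of_lt_of_le hg hh) s a) h le_rfl
      refine le_trans hb (le_trans ?_ SumKB)
      refine Finset.sum_le_sum_of_subset_of_nonneg (Finset.range_subset_range.mpr hh) ?_
      intro g hg _
      have hm := hνm g (Finset.mem_range.mp hg).le
      exact Finset.sum_nonneg fun s _ => Finset.sum_nonneg fun a _ =>
        mul_nonneg (mul_nonneg (hm.1 s) ((hσ g s).1 a)) (l1_nonneg _ _)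
    have perh : ∀ h ∈ Finset.range H,
        |(∑ s, ∑ a, ν h s * σ h s a * r h s a (dens (P Ms) μ₁ πstar h)) -
          ∑ s, ∑ a, νB h s * σ h s a * rBr h s a πstar| ≤
        4 * L_r * ε₀ + 1 / (H:ℝ) * (((H:ℝ) + 3) * ε₀) := by
      intro h hh
      have hhH : h < H := Finset.mem_range.mp hh
      have hm := hνm h hhH.le
      have t1 : |(∑ s, ∑ a, ν h s * σ h s a * r h s a (dens (P Ms) μ₁ πstar h)) -
          ∑ s, ∑ a, ν h s * σ h s a * rBr h s a πstar| ≤ 4 * L_r * ε₀ := by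
        have heq : (∑ s, ∑ a, ν h s * σ h s a * r h s a (dens (P Ms) μ₁ πstar h)) -
            (∑ s, ∑ a, ν h s * σ h s a * rBr h s a πstar)
            = ∑ s, ∑ a, ν h s * σ h s a *
                (r h s a (dens (P Ms) μ₁ πstar h) - rBr h s a πstar) := by
          rw [← Finset.sum_sub_distrib]
          refine Finset.sum_congr rfl fun s _ => ?_
          rw [← Finset.sum_sub_distrib]
          exact Finset.sum_congr rfl fun a _ => by ring
        rw [heq]
        exact exp_abs_le hm.1 hm.2 (hσ h) (fun s a => hrdiff h hhH s a)
      have t2 : |(∑ s, ∑ a, ν h s * σ h s a * rBr h s a πstar) -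
          ∑ s, ∑ a, νB h s * σ h s a * rBr h s a πstar| ≤ 1 / (H:ℝ) * l1 (ν h) (νB h) := by
        refine exp_diff_abs_le (by positivity) (hσ h) ?_
        intro s a
        have hIcc := hrBIcc h hhH s a
        rw [abs_of_nonneg hIcc.1]
        exact hIcc.2
      have t3 := chainB h hhH.le
      have habs := abs_sub_le
        (∑ s, ∑ a, ν h s * σ h s a * r h s a (dens (P Ms) μ₁ πstar h))
        (∑ s, ∑ a, ν h s * σ h s a * rBr h s a πstar)
        (∑ s, ∑ a, νB h s * σ h s a * rBr h s a πstar)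
      have t4 : 1 / (H:ℝ) * l1 (ν h) (νB h) ≤ 1 / (H:ℝ) * (((H:ℝ) + 3) * ε₀) :=
        mul_le_mul_of_nonneg_left t3 (by positivity)
      linarith
    rw [hJret, hJpam, ← Finset.sum_sub_distrib]
    refine le_trans (Finset.abs_sum_le_sum_abs _ _) ?_
    refine le_trans (Finset.sum_le_sum perh) ?_
    rw [Finset.sum_const, Finset.card_range, nsmul_eq_mul]
    have hexp : (H:ℝ) * (4 * L_r * ε₀ + 1 / (H:ℝ) * (((H:ℝ) + 3) * ε₀))
        = 4 * L_r * (H:ℝ) * ε₀ + ((H:ℝ) + 3) * ε₀ := by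
      field_simp
    rw [hexp]
    linarith
  have c1 := claim πt0 hπt0
  have c2 := claim πstar hπstar
  have hne := hNEBr πt0 hπt0
  rw [abs_le] at c1 c2
  have hLrH : 0 ≤ L_r * (H:ℝ) := mul_nonneg hLr.le (Nat.cast_nonneg H)
  nlinarith [c1.1, c1.2, c2.1, c2.2, hne, hε₀.le, hLrH,
    mul_nonneg hLrH hε₀.le,
    mul_nonneg (mul_nonneg hLrH (Nat.cast_nonneg H : (0:ℝ) ≤ (H:ℝ))) hε₀.le]
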